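/- Let G be a bipartite graph with parts A and B, and let H_1 (resp. H_2) be the split graph obtained by completing A (resp. B) to a clique. Then G has a Hamiltonian cycle if and only if both H_1 and H_2 have Hamiltonian cycles. -/

import Mathlib

open SimpleGraph

variable {V : Type*}

/-- `I` is an independent set in `G`. -/
def IndepOn (G : SimpleGraph V) (I : Set V) : Prop :=
  ∀ ⦃u⦄, u ∈ I → ∀ ⦃v⦄, v ∈ I → ¬ G.Adj u v

/-- `(K, I)` is a split partition of `G`: `K` a clique, `I` independent,
partitioning the vertex set. -/
def SplitPartition (G : SimpleGraph V) (K I : Set V) : Prop :=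
  Disjoint K I ∧ K ∪ I = Set.univ ∧ G.IsClique K ∧ IndepOn G I

/-- `G` has a Hamiltonian cycle (a spanning cycle). -/
def HasHamCycle (G : SimpleGraph V) : Prop :=
  letI := Classical.decEq V
  ∃ (a : V) (p : G.Walk a a), p.IsHamiltonianCycle

/-- `(A, B)` is a bipartition of `G`. -/
def BipartitionOn (G : SimpleGraph V) (A B : Set V) : Prop :=
  Disjoint A B ∧ A ∪ B = Set.univ ∧
    ∀ ⦃u v⦄, G.Adj u v → (u ∈ A ∧ v ∈ B) ∨ (u ∈ B ∧ v ∈ A)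

/-- The graph obtained from `G` by adding all edges between pairs of distinct
vertices of `A`. -/
def completeSide (G : SimpleGraph V) (A : Set V) : SimpleGraph V where
  Adj u v := G.Adj u v ∨ (u ∈ A ∧ v ∈ A ∧ u ≠ v)
  symm := by
    constructor
    intro u v h
    rcases h with h | ⟨ha, hb, hne⟩
    · exact Or.inl h.symm
    · exact Or.inr ⟨hb, ha, hne.symm⟩
  loopless := by
    constructor
    intro u h
    rcases h with h | ⟨_, _, hne⟩
    · exact (G.ne_of_adj h) rfl
    · exact hne rfl


private lemma mem_edges_exists_getVert {G : SimpleGraph V} {u v : V} (p : G.Walk u v) {e}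
    (he : e ∈ p.edges) : ∃ i < p.length, e = s(p.getVert i, p.getVert (i+1)) := by
  induction p with
  | nil => simp at he
  | cons h q ih =>
    rw [Walk.edges_cons] at he
    rcases List.mem_cons.1 he with rfl | he
    · exact ⟨0, by simp, by simp [Walk.getVert_cons_succ, Walk.getVert_zero]⟩
    · obtain ⟨i, hi, hei⟩ := ih he
      exact ⟨i + 1, by simpa using Nat.succ_lt_succ hi, by simpa [Walk.getVert_cons_succ] using hei⟩

private lemma hamcycle_transfer [DecidableEq V] {G H : SimpleGraph V} {a : V} {p : G.Walk a a}
    (hp : p.IsHamiltonianCycle) (h : ∀ e ∈ p.edges, e ∈ H.edgeSet) :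
    (p.transfer H h).IsHamiltonianCycle := by
  rw [Walk.isHamiltonianCycle_iff_isCycle_and_support_count_tail_eq_one] at hp ⊢
  exact ⟨hp.1.transfer h, by rw [Walk.support_transfer]; exact hp.2⟩

private lemma filter_card_eq [Fintype V] {n : ℕ} (g : Fin n → V) (hg : Function.Bijective g)
    (C : Set V) [DecidablePred (· ∈ C)] :
    (Finset.univ.filter (fun i : Fin n => g i ∈ C)).card = C.ncard := by
  rw [Set.ncard_eq_toFinset_card']
  apply Finset.card_bij (fun i _ => g i)
  · intro i hi; simpa using (Finset.mem_filter.1 hi).2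
  · intro i _ j _ hij; exact hg.1 hij
  · intro v hv
    obtain ⟨i, rfl⟩ := hg.2 v
    exact ⟨i, by simpa using Set.mem_toFinset.1 hv, rfl⟩

private lemma cyc_le [Fintype V] {A B : Set V} (hu : A ∪ B = Set.univ) {n : ℕ} [NeZero n]
    (g : Fin n → V) (hg : Function.Bijective g)
    (h : ∀ i : Fin n, ¬ (g i ∈ B ∧ g (i+1) ∈ B)) : B.ncard ≤ A.ncard := by
  classical
  rw [← filter_card_eq g hg A, ← filter_card_eq g hg B]
  apply Finset.card_le_card_of_injOn (fun i => i + 1)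
  · intro i hi
    simp only [Finset.mem_coe, Finset.mem_filter, Finset.mem_univ, true_and] at hi ⊢
    have hmem : g (i+1) ∈ A ∪ B := hu ▸ Set.mem_univ _
    rcases hmem with h' | h'
    · exact h'
    · exact absurd ⟨hi, h'⟩ (h i)
  · exact (add_left_injective (1 : Fin n)).injOn

private lemma cyc_alt [Fintype V] {A B : Set V} (hd : Disjoint A B) (hu : A ∪ B = Set.univ)
    {n : ℕ} [NeZero n] (g : Fin n → V) (hg : Function.Bijective g)
    (h : ∀ i : Fin n, ¬ (g i ∈ B ∧ g (i+1) ∈ B)) (hle : A.ncard ≤ B.ncard) :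
    ∀ i : Fin n, ¬ (g i ∈ A ∧ g (i+1) ∈ A) := by
  classical
  set SA := Finset.univ.filter (fun i : Fin n => g i ∈ A) with hSA
  set SB := Finset.univ.filter (fun i : Fin n => g i ∈ B) with hSB
  have hinj : Function.Injective (fun i : Fin n => i + 1) := add_left_injective 1
  have hsub : SB.image (fun i => i + 1) ⊆ SA := by
    intro j hj
    obtain ⟨i, hi, rfl⟩ := Finset.mem_image.1 hj
    simp only [hSB, hSA, Finset.mem_filter, Finset.mem_univ, true_and] at hi ⊢
    have hmem : g (i+1) ∈ A ∪ B := hu ▸ Set.mem_univ _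
    rcases hmem with h' | h'
    · exact h'
    · exact absurd ⟨hi, h'⟩ (h i)
  have hcard : SA.card ≤ (SB.image (fun i => i + 1)).card := by
    rw [Finset.card_image_of_injective _ hinj, hSA, hSB,
      filter_card_eq g hg A, filter_card_eq g hg B]
    exact hle
  have heq : SB.image (fun i => i + 1) = SA :=
    Finset.eq_of_subset_of_card_le hsub hcard
  rintro i ⟨hA1, hA2⟩
  have : i + 1 ∈ SA := by simp [hSA, hA2]
  rw [← heq, Finset.mem_image] at this
  obtain ⟨j, hj, hj1⟩ := this
  have : j = i := hinj hj1
  subst this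
  simp only [hSB, Finset.mem_filter] at hj
  exact (hd.le_bot ⟨hA1, hj.2⟩ : _)

private lemma extract_cyclic [Fintype V] [DecidableEq V] {H : SimpleGraph V} {a : V}
    {p : H.Walk a a} (hp : p.IsHamiltonianCycle) (n : ℕ) [NeZero n]
    (hn : n = Fintype.card V) :
    ∃ g : Fin n → V, Function.Bijective g ∧ (∀ i, H.Adj (g i) (g (i+1))) ∧
      (∀ e ∈ p.edges, ∃ i : Fin n, e = s(g i, g (i+1))) := by
  have hl : p.length = n := hn ▸ hp.length_eq
  have hn3 : 3 ≤ n := hl ▸ hp.isCycle.three_le_length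
  have hval1 : ((1 : Fin n) : ℕ) = 1 := by
    have : ((1 : Fin n) : ℕ) = 1 % n := rfl
    rw [this, Nat.mod_eq_of_lt (by omega)]
  set g : Fin n → V := fun i => p.getVert i.val with hg
  have helper : ∀ i : Fin n, p.getVert (i.val + 1) = g (i + 1) := by
    intro i
    have hvadd : ((i + 1 : Fin n) : ℕ) = (i.val + 1) % n := by
      rw [Fin.add_def, hval1]
    rcases eq_or_lt_of_le (Nat.succ_le_of_lt i.isLt) with heq | hlt
    · have heq' : i.val + 1 = n := heq
      have h0 : ((i + 1 : Fin n) : ℕ) = 0 := by rw [hvadd, heq', Nat.mod_self]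
      show p.getVert (i.val + 1) = p.getVert ((i + 1 : Fin n) : ℕ)
      rw [h0, heq', ← hl, Walk.getVert_length, Walk.getVert_zero]
    · have h1 : ((i + 1 : Fin n) : ℕ) = i.val + 1 := by rw [hvadd, Nat.mod_eq_of_lt hlt]
      show p.getVert (i.val + 1) = p.getVert ((i + 1 : Fin n) : ℕ)
      rw [h1]
  refine ⟨g, ?_, ?_, ?_⟩
  · rw [Fintype.bijective_iff_surjective_and_card]
    refine ⟨?_, by simp [hn]⟩
    intro v
    obtain ⟨m, hm, hmle⟩ := Walk.mem_support_iff_exists_getVert.1 (hp.mem_support v)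
    rcases lt_or_eq_of_le hmle with hlt | heq
    · exact ⟨⟨m, hl ▸ hlt⟩, hm⟩
    · refine ⟨⟨0, by omega⟩, ?_⟩
      rw [hg]
      simp only
      rw [Walk.getVert_zero, ← Walk.getVert_length p, ← heq, hm]
  · intro i
    rw [← helper i]
    exact p.adj_getVert_succ (hl ▸ i.isLt)
  · intro e he
    obtain ⟨i, hi, hei⟩ := mem_edges_exists_getVert p he
    refine ⟨⟨i, hl ▸ hi⟩, ?_⟩
    rw [hei, ← helper ⟨i, hl ▸ hi⟩]

/-- A bipartite graph `G` with parts `A, B` has a Hamiltonian cycle iff both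
split graphs `H₁` (completing `A`) and `H₂` (completing `B`) do. -/
theorem bipartite_hamiltonian_iff_both_completions [Fintype V]
    (G : SimpleGraph V) (A B : Set V) (hbip : BipartitionOn G A B) :
    HasHamCycle G ↔
      HasHamCycle (completeSide G A) ∧ HasHamCycle (completeSide G B) := by
  letI := Classical.decEq V
  obtain ⟨hd, hu, hadj⟩ := hbip
  have hle1 : G ≤ completeSide G A := fun u v h => Or.inl h
  have hle2 : G ≤ completeSide G B := fun u v h => Or.inl h
  constructor
  · rintro ⟨a, p, hp⟩
    refine ⟨⟨a, p.transfer _ (fun e he => edgeSet_mono hle1 (p.edges_subset_edgeSet he)),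
        hamcycle_transfer hp _⟩,
      ⟨a, p.transfer _ (fun e he => edgeSet_mono hle2 (p.edges_subset_edgeSet he)),
        hamcycle_transfer hp _⟩⟩
  · rintro ⟨⟨a₁, p₁, hp₁⟩, ⟨a₂, p₂, hp₂⟩⟩
    haveI : Nonempty V := ⟨a₁⟩
    haveI : NeZero (Fintype.card V) := ⟨Fintype.card_ne_zero⟩
    have indepB : ∀ u ∈ B, ∀ v ∈ B, ¬ (completeSide G A).Adj u v := by
      rintro u hu' v hv' (h | ⟨hA, _, _⟩)
      · rcases hadj h with ⟨huA, _⟩ | ⟨_, hvA⟩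
        · exact hd.le_bot ⟨huA, hu'⟩
        · exact hd.le_bot ⟨hvA, hv'⟩
      · exact hd.le_bot ⟨hA, hu'⟩
    have indepA : ∀ u ∈ A, ∀ v ∈ A, ¬ (completeSide G B).Adj u v := by
      rintro u hu' v hv' (h | ⟨hB, _, _⟩)
      · rcases hadj h with ⟨_, hvB⟩ | ⟨huB, _⟩
        · exact hd.le_bot ⟨hv', hvB⟩
        · exact hd.le_bot ⟨hu', huB⟩
      · exact hd.le_bot ⟨hu', hB⟩
    obtain ⟨g₁, hg₁, hadj₁, hedge₁⟩ := extract_cyclic hp₁ (Fintype.card V) rfl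
    obtain ⟨g₂, hg₂, hadj₂, _⟩ := extract_cyclic hp₂ (Fintype.card V) rfl
    have h1 : ∀ i, ¬ (g₁ i ∈ B ∧ g₁ (i+1) ∈ B) :=
      fun i ⟨hb1, hb2⟩ => indepB _ hb1 _ hb2 (hadj₁ i)
    have h2 : ∀ i, ¬ (g₂ i ∈ A ∧ g₂ (i+1) ∈ A) :=
      fun i ⟨hb1, hb2⟩ => indepA _ hb1 _ hb2 (hadj₂ i)
    have hAB : A.ncard ≤ B.ncard :=
      cyc_le (by rw [Set.union_comm]; exact hu) g₂ hg₂ h2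
    have halt : ∀ i, ¬ (g₁ i ∈ A ∧ g₁ (i+1) ∈ A) := cyc_alt hd hu g₁ hg₁ h1 hAB
    have hE : ∀ e ∈ p₁.edges, e ∈ G.edgeSet := by
      intro e he
      obtain ⟨i, rfl⟩ := hedge₁ e he
      rcases hadj₁ i with h | ⟨ha1, ha2, _⟩
      · exact h
      · exact absurd ⟨ha1, ha2⟩ (halt i)
    exact ⟨a₁, p₁.transfer G hE, hamcycle_transfer hp₁ hE⟩
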